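/- Let K ⊆ ℕ^s be a representative set, i.e., a set containing exactly one element of D(h⃗) for every h⃗ ∈ ℤ_p^m. Then for all n, v ∈ {0,…,p^m−1}, p^{−m} Σ_{k ∈ K} wal_k(x_n) · conj(wal_k(x_v)) = 1 if n = v and = 0 otherwise, where x_0,…,x_{p^m−1} are the points of the digital net P(C). -/

import Mathlib

open scoped BigOperators

/-- `ω_p = exp(2πi/p)`. -/
noncomputable def omega (p : ℕ) : ℂ := Complex.exp (2 * Real.pi * Complex.I / p)

/-- The `i`-th base-`p` digit of the natural number `n` (starting from `i = 0`). -/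
def ndigit (p n i : ℕ) : ℕ := (n / p ^ i) % p

/-- The `i`-th base-`p` digit of the real number `x` (starting from `i = 1`):
`x_i = ⌊p^i x⌋ mod p`. -/
noncomputable def xdigit (p : ℕ) (x : ℝ) (i : ℕ) : ℕ := (⌊(p : ℝ) ^ i * x⌋).toNat % p

/-- The base-`p` Walsh function `wal_k(x) = ω_p^{x_1 k_0 + x_2 k_1 + ⋯}`
(the digits of `k` vanish beyond index `k`, so the sum below is the full series). -/
noncomputable def wal (p k : ℕ) (x : ℝ) : ℂ :=
  omega p ^ (∑ i ∈ Finset.range (k + 1), xdigit p x (i + 1) * ndigit p k i)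

/-- Multivariate Walsh function `wal_k(x) = ∏_j wal_{k_j}(x_j)`. -/
noncomputable def walS (p s : ℕ) (k : Fin s → ℕ) (x : Fin s → ℝ) : ℂ :=
  ∏ j, wal p (k j) (x j)

/-- The vector of the first `m` base-`p` digits of `n`, viewed in `ℤ_p^m`. -/
def nvec (p m : ℕ) (n : ℕ) : Fin m → ZMod p := fun i => (ndigit p n i : ZMod p)

/-- The `n`-th point of the digital net generated by matrices `C = (C_1,…,C_s)`:
`x_{j,n} = Σ_{i=1}^m y_{j,n,i} p^{-i}` where `y⃗_{j,n} = C_j n⃗`. -/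
noncomputable def netPoint (p s m : ℕ) (C : Fin s → Matrix (Fin m) (Fin m) (ZMod p)) (n : ℕ) :
    Fin s → ℝ :=
  fun j => ∑ i : Fin m, ((Matrix.mulVec (C j) (nvec p m n)) i).val / (p : ℝ) ^ (i.val + 1)

/-- `C·k = C_1ᵀ k⃗_1^{(m)} + ⋯ + C_sᵀ k⃗_s^{(m)} ∈ ℤ_p^m`. -/
def Cdot (p s m : ℕ) (C : Fin s → Matrix (Fin m) (Fin m) (ZMod p)) (k : Fin s → ℕ) :
    Fin m → ZMod p :=
  ∑ j, Matrix.mulVec (Matrix.transpose (C j)) (nvec p m (k j))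

/-- Digitwise addition modulo `p` of base-`p` digits: `k ⊕ l`. -/
def dadd (p k l : ℕ) : ℕ :=
  ∑ i ∈ Finset.range (k + l + 1), ((ndigit p k i + ndigit p l i) % p) * p ^ i

/-- Digitwise subtraction modulo `p` of base-`p` digits: `k ⊖ l`. -/
def dsub (p k l : ℕ) : ℕ :=
  ∑ i ∈ Finset.range (k + l + 1), ((ndigit p k i + (p - ndigit p l i)) % p) * p ^ i

set_option linter.unusedSectionVars false

section Aux

variable (p : ℕ) [Fact p.Prime]

lemma hp1 : 1 < p := (Fact.out : p.Prime).one_lt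

lemma omega_prim : IsPrimitiveRoot (omega p) p :=
  Complex.isPrimitiveRoot_exp p (Fact.out : p.Prime).ne_zero

lemma omega_ne_zero : omega p ≠ 0 := Complex.exp_ne_zero _

lemma omega_pow_p : omega p ^ p = 1 := (omega_prim p).pow_eq_one

noncomputable def psi (a : ZMod p) : ℂ := omega p ^ a.val

lemma omega_pow_mod (a : ℕ) : omega p ^ (a % p) = omega p ^ a := by
  conv_rhs => rw [← Nat.div_add_mod a p]
  rw [pow_add, pow_mul, omega_pow_p, one_pow, one_mul]

lemma omega_pow_cast (a : ℕ) : omega p ^ a = psi p (a : ZMod p) := by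
  rw [psi, ZMod.val_natCast, omega_pow_mod]

lemma psi_zero : psi p 0 = 1 := by
  simp [psi, ZMod.val_zero]

lemma psi_add (a b : ZMod p) : psi p (a + b) = psi p a * psi p b := by
  rw [psi, ZMod.val_add, omega_pow_mod, pow_add]; rfl

lemma psi_ne_zero (a : ZMod p) : psi p a ≠ 0 := pow_ne_zero _ (omega_ne_zero p)

lemma conj_omega : (starRingEnd ℂ) (omega p) = (omega p)⁻¹ := by
  rw [omega, ← Complex.exp_conj, ← Complex.exp_neg]
  congr 1
  simp [map_div₀, Complex.conj_I]
  ring_nf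
  simp [Complex.ext_iff]
  ring

lemma conj_psi (a : ZMod p) : (starRingEnd ℂ) (psi p a) = psi p (-a) := by
  have h1 : psi p a * psi p (-a) = 1 := by
    rw [← psi_add, add_neg_cancel, psi_zero]
  have h2 : (starRingEnd ℂ) (psi p a) = (psi p a)⁻¹ := by
    rw [psi, map_pow, conj_omega, inv_pow]
  rw [h2]
  exact (inv_eq_of_mul_eq_one_right h1).symm ▸ rfl

lemma psi_sum {ι : Type*} (t : Finset ι) (f : ι → ZMod p) :
    psi p (∑ i ∈ t, f i) = ∏ i ∈ t, psi p (f i) := by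
  induction t using Finset.cons_induction with
  | empty => simp [psi_zero]
  | cons a t ha ih => simp [psi_add, ih]

lemma sum_psi : ∑ a : ZMod p, psi p a = 0 := by
  have h := (omega_prim p).geom_sum_eq_zero (hp1 p)
  rw [← h]
  apply Finset.sum_nbij' (i := fun (a : ZMod p) => a.val) (j := fun i => (i : ZMod p))
  · intro a _; exact Finset.mem_range.mpr (ZMod.val_lt a)
  · intro a _; exact Finset.mem_univ _
  · intro a _; simp [ZMod.natCast_val, ZMod.cast_id]
  · intro i hi; exact ZMod.val_cast_of_lt (Finset.mem_range.mp hi)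
  · intro a _; rfl

lemma sum_psi_mul (w : ZMod p) :
    ∑ a : ZMod p, psi p (w * a) = if w = 0 then (p : ℂ) else 0 := by
  split_ifs with hw
  · subst hw; simp [psi_zero, ZMod.card]
  · rw [← sum_psi p]
    exact Fintype.sum_equiv (Equiv.mulLeft₀ w hw) _ _ (fun a => rfl)

lemma sum_psi_dot (m : ℕ) (w : Fin m → ZMod p) :
    ∑ h : Fin m → ZMod p, psi p (∑ i, w i * h i) =
      if w = 0 then ((p : ℂ)) ^ m else 0 := by
  have h1 : ∀ h : Fin m → ZMod p, psi p (∑ i, w i * h i) = ∏ i, psi p (w i * h i) :=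
    fun h => psi_sum p _ _
  simp_rw [h1]
  rw [← Fintype.prod_sum (f := fun i c => psi p (w i * c))]
  simp_rw [sum_psi_mul]
  split_ifs with hw
  · subst hw; simp
  · obtain ⟨i0, hi0⟩ : ∃ i, w i ≠ 0 := by
      by_contra h; push_neg at h; exact hw (funext h)
    exact Finset.prod_eq_zero (Finset.mem_univ i0) (by simp [hi0])

end Aux

section Digits

variable {p : ℕ}

lemma digit_sum (hp : 1 < p) (c : ℕ → ℕ) (hc : ∀ t, c t < p) (m u : ℕ) :
    (∑ t ∈ Finset.range m, c t * p ^ t) / p ^ u % p = if u < m then c u else 0 := by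
  induction u generalizing c m with
  | zero =>
    cases m with
    | zero => simp
    | succ m' =>
      have h1 : ∑ t ∈ Finset.range (m' + 1), c t * p ^ t
          = p * (∑ t ∈ Finset.range m', c (t + 1) * p ^ t) + c 0 := by
        rw [Finset.sum_range_succ', Finset.mul_sum, pow_zero, mul_one]
        congr 1
        exact Finset.sum_congr rfl fun t _ => by ring
      rw [h1, pow_zero, Nat.div_one, Nat.mul_add_mod, Nat.mod_eq_of_lt (hc 0)]
      simp
  | succ u ih =>
    cases m with
    | zero => simp
    | succ m' =>
      have h1 : ∑ t ∈ Finset.range (m' + 1), c t * p ^ t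
          = p * (∑ t ∈ Finset.range m', c (t + 1) * p ^ t) + c 0 := by
        rw [Finset.sum_range_succ', Finset.mul_sum, pow_zero, mul_one]
        congr 1
        exact Finset.sum_congr rfl fun t _ => by ring
      have h2 : (p * (∑ t ∈ Finset.range m', c (t + 1) * p ^ t) + c 0) / p
          = ∑ t ∈ Finset.range m', c (t + 1) * p ^ t := by
        rw [Nat.mul_add_div (by omega)]
        simp [Nat.div_eq_of_lt (hc 0)]
      rw [h1, pow_succ', ← Nat.div_div_eq_div_mul, h2,
        ih (fun t => c (t + 1)) (fun t => hc (t + 1)) m']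
      simp [Nat.succ_lt_succ_iff]

lemma ndigit_lt (hp : 1 < p) (n i : ℕ) : ndigit p n i < p := Nat.mod_lt _ (by omega)

lemma ndigit_eq_zero_of_ge (hp : 1 < p) {k i : ℕ} (h : k < i + 1) : ndigit p k i = 0 := by
  have : k < p ^ i := by
    calc k < i + 1 := h
    _ ≤ 2 ^ i := Nat.succ_le_of_lt (Nat.lt_two_pow_self (n := i))
    _ ≤ p ^ i := Nat.pow_le_pow_left hp i
  simp [ndigit, Nat.div_eq_of_lt this]

lemma sum_ndigit (hp : 1 < p) (n m : ℕ) :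
    ∑ i ∈ Finset.range m, ndigit p n i * p ^ i = n % p ^ m := by
  induction m with
  | zero => simp [Nat.mod_one]
  | succ m ih =>
    rw [Finset.sum_range_succ, ih]
    set q := n / p ^ m with hqdef
    set r := n % p ^ m with hrdef
    have hpm : 0 < p ^ m := Nat.pow_pos (by omega)
    have hq : q = p * (q / p) + q % p := (Nat.div_add_mod q p).symm
    have hn : n = p ^ m * q + r := (Nat.div_add_mod n (p ^ m)).symm
    have e1 : n = p ^ (m + 1) * (q / p) + (p ^ m * (q % p) + r) := by
      conv_lhs => rw [hn, hq]
      rw [pow_succ]; ring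
    have e2 : p ^ m * (q % p) + r < p ^ (m + 1) := by
      have h5 : q % p < p := Nat.mod_lt _ (by omega)
      have h4 : r < p ^ m := Nat.mod_lt _ hpm
      have : p ^ m * (q % p) + r < p ^ m * (q % p + 1) := by nlinarith
      calc p ^ m * (q % p) + r < p ^ m * (q % p + 1) := this
        _ ≤ p ^ m * p := Nat.mul_le_mul_left _ (by omega)
        _ = p ^ (m + 1) := by rw [pow_succ]
    have e3 : n % p ^ (m + 1) = p ^ m * (q % p) + r := by
      conv_lhs => rw [e1]
      rw [Nat.mul_add_mod, Nat.mod_eq_of_lt e2]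
    rw [e3]
    show r + n / p ^ m % p * p ^ m = _
    rw [← hqdef]; ring

lemma digits_inj (hp : 1 < p) {n v m : ℕ} (hn : n < p ^ m) (hv : v < p ^ m)
    (h : ∀ i < m, ndigit p n i = ndigit p v i) : n = v := by
  have h1 := sum_ndigit hp n m
  have h2 := sum_ndigit hp v m
  rw [Nat.mod_eq_of_lt hn] at h1
  rw [Nat.mod_eq_of_lt hv] at h2
  rw [← h1, ← h2]
  exact Finset.sum_congr rfl fun i hi => by
    rw [h i (Finset.mem_range.mp hi)]

end Digits

section Net

variable {p : ℕ}

lemma real_sum_eq (hp : 1 < p) (y : ℕ → ℕ) (m : ℕ) :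
    ∑ t ∈ Finset.range m, (y t : ℝ) / (p : ℝ) ^ (t + 1) =
      ((∑ t ∈ Finset.range m, y (m - 1 - t) * p ^ t : ℕ) : ℝ) / (p : ℝ) ^ m := by
  have hp0 : (p : ℝ) ≠ 0 := by positivity
  push_cast
  rw [Finset.sum_div]
  apply Finset.sum_nbij' (i := fun t => m - 1 - t) (j := fun t => m - 1 - t)
  · intro t ht; have := Finset.mem_range.mp ht; exact Finset.mem_range.mpr (by omega)
  · intro t ht; have := Finset.mem_range.mp ht; exact Finset.mem_range.mpr (by omega)
  · intro t ht; have := Finset.mem_range.mp ht; omega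
  · intro t ht; have := Finset.mem_range.mp ht; omega
  · intro t ht
    have htm := Finset.mem_range.mp ht
    have h1 : m - 1 - (m - 1 - t) = t := by omega
    rw [h1]
    have h2 : (p : ℝ) ^ (m - 1 - t) * (p : ℝ) ^ (t + 1) = (p : ℝ) ^ m := by
      rw [← pow_add]; congr 1; omega
    field_simp
    rw [← h2]; ring

lemma xdigit_div_le (hp : 1 < p) (y : ℕ → ℕ) (hy : ∀ i, y i < p) (m u : ℕ)
    (hu1 : 1 ≤ u) (hum : u ≤ m) :
    xdigit p (((∑ t ∈ Finset.range m, y (m - 1 - t) * p ^ t : ℕ) : ℝ) / (p : ℝ) ^ m) u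
      = y (u - 1) := by
  have hp0 : (p : ℝ) ≠ 0 := by positivity
  set N := ∑ t ∈ Finset.range m, y (m - 1 - t) * p ^ t with hN
  have e : (p : ℝ) ^ u * ((N : ℝ) / (p : ℝ) ^ m) = (N : ℝ) / ((p ^ (m - u) : ℕ) : ℝ) := by
    push_cast
    have h2 : (p : ℝ) ^ u * (p : ℝ) ^ (m - u) = (p : ℝ) ^ m := by
      rw [← pow_add]; congr 1; omega
    field_simp
    rw [← h2]; ring
  rw [xdigit, e, Int.floor_toNat]
  have h3 : ⌊(N : ℝ) / ((p ^ (m - u) : ℕ) : ℝ)⌋₊ = N / p ^ (m - u) := by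
    rw [Nat.floor_div_natCast, Nat.floor_natCast]
  rw [h3, hN, digit_sum hp _ (fun t => hy _) m (m - u), if_pos (by omega)]
  congr 1; omega

lemma xdigit_div_gt (hp : 1 < p) (y : ℕ → ℕ) (m u : ℕ) (hu : m < u) :
    xdigit p (((∑ t ∈ Finset.range m, y (m - 1 - t) * p ^ t : ℕ) : ℝ) / (p : ℝ) ^ m) u
      = 0 := by
  have hp0 : (p : ℝ) ≠ 0 := by positivity
  set N := ∑ t ∈ Finset.range m, y (m - 1 - t) * p ^ t with hN
  have e : (p : ℝ) ^ u * ((N : ℝ) / (p : ℝ) ^ m) = ((N * p ^ (u - m) : ℕ) : ℝ) := by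
    push_cast
    have h2 : (p : ℝ) ^ m * (p : ℝ) ^ (u - m) = (p : ℝ) ^ u := by
      rw [← pow_add]; congr 1; omega
    field_simp
    rw [← h2]; ring
  rw [xdigit, e, Int.floor_natCast, Int.toNat_natCast]
  rw [show u - m = (u - m - 1) + 1 by omega, pow_succ, ← mul_assoc]
  simp [Nat.mul_mod]

end Net

section Main

variable (p s m : ℕ) [Fact p.Prime] (C : Fin s → Matrix (Fin m) (Fin m) (ZMod p))

/-- `y⃗_{j,n}` as a function `ℕ → ℕ`. -/
def yfun (n : ℕ) (j : Fin s) : ℕ → ℕ :=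
  fun i => if h : i < m then ((Matrix.mulVec (C j) (nvec p m n)) ⟨i, h⟩).val else 0

lemma yfun_lt (n : ℕ) (j : Fin s) (i : ℕ) : yfun p s m C n j i < p := by
  haveI : NeZero p := ⟨(Fact.out : p.Prime).ne_zero⟩
  unfold yfun
  split_ifs with h
  · exact ZMod.val_lt _
  · exact (Fact.out : p.Prime).pos

lemma netPoint_eq (n : ℕ) (j : Fin s) :
    netPoint p s m C n j =
      ((∑ t ∈ Finset.range m, yfun p s m C n j (m - 1 - t) * p ^ t : ℕ) : ℝ) / (p : ℝ) ^ m := by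
  rw [← real_sum_eq (hp1 p) (yfun p s m C n j) m]
  rw [netPoint, ← Fin.sum_univ_eq_sum_range (fun t => (yfun p s m C n j t : ℝ) / (p : ℝ) ^ (t + 1)) m]
  apply Finset.sum_congr rfl
  intro i _
  simp [yfun]

lemma xdigit_netPoint_le (n : ℕ) (j : Fin s) (u : ℕ) (hu1 : 1 ≤ u) (hum : u ≤ m) :
    xdigit p (netPoint p s m C n j) u
      = ((Matrix.mulVec (C j) (nvec p m n)) ⟨u - 1, by omega⟩).val := by
  rw [netPoint_eq, xdigit_div_le (hp1 p) _ (yfun_lt p s m C n j) m u hu1 hum]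
  rw [yfun, dif_pos (show u - 1 < m by omega)]

lemma xdigit_netPoint_gt (n : ℕ) (j : Fin s) (u : ℕ) (hu : m < u) :
    xdigit p (netPoint p s m C n j) u = 0 := by
  rw [netPoint_eq, xdigit_div_gt (hp1 p) _ m u hu]

lemma wal_netPoint (k n : ℕ) (j : Fin s) :
    wal p k (netPoint p s m C n j) =
      psi p (∑ i : Fin m, (Matrix.mulVec (C j) (nvec p m n)) i * nvec p m k i) := by
  set x := netPoint p s m C n j with hx
  set M := max (k + 1) m with hM
  rw [wal]
  have h1 : ∑ i ∈ Finset.range (k + 1), xdigit p x (i + 1) * ndigit p k i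
      = ∑ i ∈ Finset.range M, xdigit p x (i + 1) * ndigit p k i := by
    apply Finset.sum_subset (Finset.range_subset_range.mpr (le_max_left _ _))
    intro i hi hni
    simp only [Finset.mem_range] at hi hni
    rw [ndigit_eq_zero_of_ge (hp1 p) (by omega), mul_zero]
  have h2 : ∑ i ∈ Finset.range m, xdigit p x (i + 1) * ndigit p k i
      = ∑ i ∈ Finset.range M, xdigit p x (i + 1) * ndigit p k i := by
    apply Finset.sum_subset (Finset.range_subset_range.mpr (le_max_right _ _))
    intro i hi hni
    simp only [Finset.mem_range] at hi hni
    rw [hx, xdigit_netPoint_gt p s m C n j (i + 1) (by omega), zero_mul]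
  rw [h1, ← h2, omega_pow_cast]
  congr 1
  rw [Nat.cast_sum,
    ← Fin.sum_univ_eq_sum_range (fun i => ((xdigit p x (i + 1) * ndigit p k i : ℕ) : ZMod p)) m]
  apply Finset.sum_congr rfl
  intro i _
  have hle := xdigit_netPoint_le p s m C n j (i.val + 1) (by omega) (by omega)
  push_cast
  rw [← hx] at hle
  rw [hle]
  have hfin : (⟨i.val + 1 - 1, by omega⟩ : Fin m) = i := by
    apply Fin.ext; simp
  rw [hfin]
  simp [ZMod.natCast_val, ZMod.cast_id, nvec]

lemma walS_netPoint (k : Fin s → ℕ) (n : ℕ) :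
    walS p s k (netPoint p s m C n) =
      psi p (∑ i : Fin m, nvec p m n i * Cdot p s m C k i) := by
  rw [walS]
  have key : ∀ (A : Matrix (Fin m) (Fin m) (ZMod p)) (x y : Fin m → ZMod p),
      ∑ i, (Matrix.mulVec A x) i * y i = ∑ i, x i * (Matrix.mulVec A.transpose y) i := by
    intro A x y
    simp only [Matrix.mulVec, dotProduct, Matrix.transpose_apply,
      Finset.sum_mul, Finset.mul_sum]
    rw [Finset.sum_comm]
    exact Finset.sum_congr rfl fun i _ => Finset.sum_congr rfl fun t _ => by ring
  calc ∏ j, wal p (k j) (netPoint p s m C n j)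
      = ∏ j, psi p (∑ i : Fin m, (Matrix.mulVec (C j) (nvec p m n)) i * nvec p m (k j) i) := by
        exact Finset.prod_congr rfl fun j _ => wal_netPoint p s m C (k j) n j
    _ = psi p (∑ j, ∑ i : Fin m, (Matrix.mulVec (C j) (nvec p m n)) i * nvec p m (k j) i) :=
        (psi_sum p _ _).symm
    _ = psi p (∑ i : Fin m, nvec p m n i * Cdot p s m C k i) := by
        congr 1
        calc ∑ j, ∑ i : Fin m, (Matrix.mulVec (C j) (nvec p m n)) i * nvec p m (k j) i
            = ∑ j, ∑ i : Fin m, nvec p m n i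
                * (Matrix.mulVec (C j).transpose (nvec p m (k j))) i := by
              exact Finset.sum_congr rfl fun j _ => key _ _ _
          _ = ∑ i : Fin m, nvec p m n i
                * ∑ j, (Matrix.mulVec (C j).transpose (nvec p m (k j))) i := by
              rw [Finset.sum_comm]
              exact Finset.sum_congr rfl fun i _ => by rw [Finset.mul_sum]
          _ = ∑ i : Fin m, nvec p m n i * Cdot p s m C k i := by
              exact Finset.sum_congr rfl fun i _ => by rw [Cdot, Finset.sum_apply]

end Main

/-- orthogonality of the Walsh functions indexed by a representative set `K`
on the points of the digital net. -/
theorem statement10 (p s m : ℕ) [Fact p.Prime] (hs : 1 ≤ s) (hm : 1 ≤ m)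
    (C : Fin s → Matrix (Fin m) (Fin m) (ZMod p))
    (K : Finset (Fin s → ℕ))
    (hK : ∀ h : Fin m → ZMod p, ∃! k, k ∈ K ∧ Cdot p s m C k = h)
    (n v : ℕ) (hn : n < p ^ m) (hv : v < p ^ m) :
    ((p : ℂ) ^ m)⁻¹ * ∑ k ∈ K,
        walS p s k (netPoint p s m C n) * (starRingEnd ℂ) (walS p s k (netPoint p s m C v)) =
      if n = v then 1 else 0 := by
  haveI : NeZero p := ⟨(Fact.out : p.Prime).ne_zero⟩
  set w : Fin m → ZMod p := fun i => nvec p m n i - nvec p m v i with hw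
  have hterm : ∀ k : Fin s → ℕ,
      walS p s k (netPoint p s m C n) * (starRingEnd ℂ) (walS p s k (netPoint p s m C v))
        = psi p (∑ i, w i * Cdot p s m C k i) := by
    intro k
    rw [walS_netPoint, walS_netPoint, conj_psi, ← psi_add]
    congr 1
    rw [← sub_eq_add_neg, ← Finset.sum_sub_distrib]
    exact Finset.sum_congr rfl fun i _ => by rw [hw]; ring
  have hsum : ∑ k ∈ K,
      walS p s k (netPoint p s m C n) * (starRingEnd ℂ) (walS p s k (netPoint p s m C v))
        = ∑ h : Fin m → ZMod p, psi p (∑ i, w i * h i) := by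
    rw [Finset.sum_congr rfl fun k _ => hterm k]
    apply Finset.sum_bij (i := fun k _ => Cdot p s m C k)
    · intro k _; exact Finset.mem_univ _
    · intro k1 h1 k2 h2 he
      obtain ⟨k0, _, hu⟩ := hK (Cdot p s m C k1)
      rw [hu k1 ⟨h1, rfl⟩, hu k2 ⟨h2, he.symm⟩]
    · intro h _
      obtain ⟨k0, ⟨hk0K, hk0c⟩, _⟩ := hK h
      exact ⟨k0, hk0K, hk0c⟩
    · intro k _; rfl
  rw [hsum, sum_psi_dot]
  have hwz : w = 0 ↔ n = v := by
    constructor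
    · intro h0
      apply digits_inj (hp1 p) hn hv
      intro i hi
      have h1 := congrFun h0 ⟨i, hi⟩
      rw [hw] at h1
      simp only [Pi.zero_apply, sub_eq_zero] at h1
      have h2 : (ndigit p n i : ZMod p) = (ndigit p v i : ZMod p) := h1
      rw [← ZMod.val_cast_of_lt (ndigit_lt (hp1 p) n i),
        ← ZMod.val_cast_of_lt (ndigit_lt (hp1 p) v i), h2]
    · intro h; subst h; funext i; simp [hw]
  by_cases hnv : n = v
  · rw [if_pos (hwz.mpr hnv), if_pos hnv, inv_mul_cancel₀]
    exact pow_ne_zero _ (Nat.cast_ne_zero.mpr (Fact.out : p.Prime).ne_zero)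
  · rw [if_neg (fun h => hnv (hwz.mp h)), if_neg hnv, mul_zero]
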